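/- Let E be a finite set partitioned into nonempty parts E_1, …, E_p. For each j let X_j be a random subset of E_j, with X_1, …, X_p mutually independent, and let q ∈ [0,1]^E be defined by q_i = P[i ∈ X_j] for i ∈ E_j. Suppose that for each j and every submodular g : 2^{E_j} → ℝ one has E[g(X_j)] ≥ G(q|_{E_j}), where G is the multilinear extension of g. Then for every submodular f : 2^E → ℝ one has E[f(X_1 ∪ ⋯ ∪ X_p)] ≥ F(q), where F is the multilinear extension of f. -/

import Mathlib

open MeasureTheory ProbabilityTheory

/-- `f : 2^E → ℝ` is submodular. -/
def Submodular {E : Type} [DecidableEq E] (f : Finset E → ℝ) : Prop :=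
  ∀ S T : Finset E, S ⊆ T → ∀ e ∉ T,
    f (insert e T) - f T ≤ f (insert e S) - f S

/-- `g` is submodular as a function of subsets of the ground set `G ⊆ E`. -/
def SubmodularOn {E : Type} [DecidableEq E] (G : Finset E) (g : Finset E → ℝ) : Prop :=
  ∀ S T : Finset E, S ⊆ T → T ⊆ G → ∀ e ∈ G, e ∉ T →
    g (insert e T) - g T ≤ g (insert e S) - g S

/-- The multilinear extension of `g` over the ground set `G ⊆ E`:
`∑_{S⊆G} g(S) ∏_{i∈S} x_i ∏_{i∈G∖S} (1−x_i)`. -/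
noncomputable def multilinearOn {E : Type} [DecidableEq E] (G : Finset E)
    (g : Finset E → ℝ) (x : E → ℝ) : ℝ :=
  ∑ S ∈ G.powerset, g S * (∏ i ∈ S, x i) * ∏ i ∈ G \ S, (1 - x i)

/-- The multilinear extension over the full ground set `E`. -/
noncomputable def multilinear {E : Type} [Fintype E] [DecidableEq E]
    (f : Finset E → ℝ) (x : E → ℝ) : ℝ :=
  multilinearOn Finset.univ f x

section Aux

variable {E : Type} [DecidableEq E]

lemma multilinearOn_empty (g : Finset E → ℝ) (x : E → ℝ) :
    multilinearOn ∅ g x = g ∅ := by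
  simp [multilinearOn]

lemma multilinearOn_union (G H : Finset E) (hGH : Disjoint G H)
    (f : Finset E → ℝ) (x : E → ℝ) :
    multilinearOn (G ∪ H) f x
      = multilinearOn G (fun S => multilinearOn H (fun R => f (S ∪ R)) x) x := by
  have key : ∀ S ∈ G.powerset, ∀ R ∈ H.powerset,
      f (S ∪ R) * (∏ i ∈ S ∪ R, x i) * ∏ i ∈ (G ∪ H) \ (S ∪ R), (1 - x i)
        = f (S ∪ R) * (∏ i ∈ R, x i) * (∏ i ∈ H \ R, (1 - x i)) *
            (∏ i ∈ S, x i) * ∏ i ∈ G \ S, (1 - x i) := by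
    intro S hS R hR
    rw [Finset.mem_powerset] at hS hR
    have hSR : Disjoint S R := hGH.mono hS hR
    have hsd : (G ∪ H) \ (S ∪ R) = (G \ S) ∪ (H \ R) := by
      ext i
      simp only [Finset.mem_sdiff, Finset.mem_union]
      constructor
      · rintro ⟨hi | hi, hni⟩
        · exact Or.inl ⟨hi, fun h => hni (Or.inl h)⟩
        · exact Or.inr ⟨hi, fun h => hni (Or.inr h)⟩
      · rintro (⟨hi, hni⟩ | ⟨hi, hni⟩)
        · refine ⟨Or.inl hi, ?_⟩
          rintro (h | h)
          · exact hni h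
          · exact (Finset.disjoint_left.mp hGH hi) (hR h)
        · refine ⟨Or.inr hi, ?_⟩
          rintro (h | h)
          · exact (Finset.disjoint_left.mp hGH (hS h)) hi
          · exact hni h
    rw [Finset.prod_union hSR, hsd,
      Finset.prod_union (hGH.mono Finset.sdiff_subset Finset.sdiff_subset)]
    ring
  have hrhs : multilinearOn G (fun S => multilinearOn H (fun R => f (S ∪ R)) x) x
      = ∑ S ∈ G.powerset, ∑ R ∈ H.powerset,
          f (S ∪ R) * (∏ i ∈ S ∪ R, x i) * ∏ i ∈ (G ∪ H) \ (S ∪ R), (1 - x i) := by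
    rw [multilinearOn]
    refine Finset.sum_congr rfl fun S hS => ?_
    rw [multilinearOn, Finset.sum_mul, Finset.sum_mul]
    refine Finset.sum_congr rfl fun R hR => ?_
    rw [key S hS R hR]
  rw [hrhs, multilinearOn, ← Finset.sum_product']
  refine Finset.sum_nbij' (fun T => (T ∩ G, T ∩ H)) (fun SR => SR.1 ∪ SR.2) ?_ ?_ ?_ ?_ ?_
  · intro T hT
    rw [Finset.mem_powerset] at hT
    simp only [Finset.mem_product, Finset.mem_powerset]
    exact ⟨Finset.inter_subset_right, Finset.inter_subset_right⟩
  · intro SR hSR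
    simp only [Finset.mem_product, Finset.mem_powerset] at hSR
    rw [Finset.mem_powerset]
    exact Finset.union_subset_union hSR.1 hSR.2
  · intro T hT
    rw [Finset.mem_powerset] at hT
    show T ∩ G ∪ T ∩ H = T
    rw [← Finset.inter_union_distrib_left, Finset.inter_eq_left.mpr hT]
  · intro SR hSR
    simp only [Finset.mem_product, Finset.mem_powerset] at hSR
    have h1 : (SR.1 ∪ SR.2) ∩ G = SR.1 := by
      rw [Finset.union_inter_distrib_right, Finset.inter_eq_left.mpr hSR.1,
        Finset.disjoint_iff_inter_eq_empty.mp (hGH.symm.mono_left hSR.2)]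
      exact Finset.union_empty _
    have h2 : (SR.1 ∪ SR.2) ∩ H = SR.2 := by
      rw [Finset.union_inter_distrib_right, Finset.inter_eq_left.mpr hSR.2,
        Finset.disjoint_iff_inter_eq_empty.mp (hGH.mono_left hSR.1)]
      exact Finset.empty_union _
    show ((SR.1 ∪ SR.2) ∩ G, (SR.1 ∪ SR.2) ∩ H) = SR
    rw [h1, h2]
  · intro T hT
    rw [Finset.mem_powerset] at hT
    have hTT : T ∩ G ∪ T ∩ H = T := by
      rw [← Finset.inter_union_distrib_left, Finset.inter_eq_left.mpr hT]
    show (f T * ∏ i ∈ T, x i) * ∏ i ∈ (G ∪ H) \ T, (1 - x i)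
        = (f (T ∩ G ∪ T ∩ H) * ∏ i ∈ T ∩ G ∪ T ∩ H, x i) *
            ∏ i ∈ (G ∪ H) \ (T ∩ G ∪ T ∩ H), (1 - x i)
    rw [hTT]

lemma submodularOn_aux (G H B : Finset E) (f : Finset E → ℝ) (hf : Submodular f)
    (q : E → ℝ) (hq0 : ∀ i, 0 ≤ q i) (hq1 : ∀ i, q i ≤ 1) :
    SubmodularOn G (fun S => multilinearOn H (fun R => f ((B ∪ S) ∪ R)) q) := by
  intro S T hST hTG e heG heT
  simp only [multilinearOn]
  rw [← Finset.sum_sub_distrib, ← Finset.sum_sub_distrib]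
  refine Finset.sum_le_sum fun R hR => ?_
  have hc : 0 ≤ (∏ i ∈ R, q i) * ∏ i ∈ H \ R, (1 - q i) :=
    mul_nonneg (Finset.prod_nonneg fun i _ => hq0 i)
      (Finset.prod_nonneg fun i _ => sub_nonneg.mpr (hq1 i))
  have h1 : ∀ C : Finset E, (B ∪ insert e C) ∪ R = insert e ((B ∪ C) ∪ R) := by
    intro C; rw [Finset.union_insert, Finset.insert_union]
  have hre : ∀ a b c d : ℝ, a * c * d - b * c * d = (a - b) * (c * d) := by
    intros; ring
  rw [h1, h1, hre, hre]
  refine mul_le_mul_of_nonneg_right ?_ hc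
  by_cases he : e ∈ (B ∪ T) ∪ R
  · have heBR : e ∈ B ∨ e ∈ R := by
      rcases Finset.mem_union.mp he with h | h
      · rcases Finset.mem_union.mp h with h | h
        · exact Or.inl h
        · exact absurd h heT
      · exact Or.inr h
    have heS : e ∈ (B ∪ S) ∪ R := by
      rcases heBR with h | h
      · exact Finset.mem_union_left _ (Finset.mem_union_left _ h)
      · exact Finset.mem_union_right _ h
    rw [Finset.insert_eq_self.mpr he, Finset.insert_eq_self.mpr heS, sub_self, sub_self]
  · exact hf ((B ∪ S) ∪ R) ((B ∪ T) ∪ R)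
      (Finset.union_subset_union_left (Finset.union_subset_union_right hST)) e he

lemma integral_eq_sum_fintype {Ω : Type} [MeasurableSpace Ω] (μ : Measure Ω)
    [IsProbabilityMeasure μ]
    {V : Type} [Fintype V] [DecidableEq V] [MeasurableSpace V] [MeasurableSingletonClass V]
    (Y : Ω → V) (hY : Measurable Y) (g : V → ℝ) :
    ∫ ω, g (Y ω) ∂μ = ∑ v : V, g v * (μ (Y ⁻¹' {v})).toReal := by
  have hfun : ∀ ω, g (Y ω) = ∑ v : V, Set.indicator (Y ⁻¹' {v}) (fun _ => g v) ω := by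
    intro ω
    rw [Finset.sum_eq_single (Y ω)]
    · rw [Set.indicator_of_mem (by simp : ω ∈ Y ⁻¹' {Y ω})]
    · intro v _ hv
      refine Set.indicator_of_notMem ?_ _
      simp only [Set.mem_preimage, Set.mem_singleton_iff]
      exact fun h => hv h.symm
    · simp
  calc ∫ ω, g (Y ω) ∂μ
      = ∫ ω, ∑ v : V, Set.indicator (Y ⁻¹' {v}) (fun _ => g v) ω ∂μ := by
        exact integral_congr_ae (Filter.Eventually.of_forall hfun)
    _ = ∑ v : V, ∫ ω, Set.indicator (Y ⁻¹' {v}) (fun _ => g v) ω ∂μ := by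
        refine integral_finset_sum _ fun v _ => ?_
        exact (integrable_const _).indicator (hY (measurableSet_singleton v))
    _ = ∑ v : V, g v * (μ (Y ⁻¹' {v})).toReal := by
        refine Finset.sum_congr rfl fun v _ => ?_
        rw [integral_indicator_const _ (hY (measurableSet_singleton v)), smul_eq_mul, mul_comm]
        rfl

end Aux

/-- Let `E` be partitioned into nonempty parts `E_1, …, E_p`, and for each `j` let `X_j`
be a random subset of `E_j`, with `X_1, …, X_p` mutually independent and marginals
`q_i = P[i ∈ X_j]` for `i ∈ E_j`. If each `X_j` satisfies submodular dominance for every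
submodular function on subsets of `E_j`, then the union `X_1 ∪ ⋯ ∪ X_p` satisfies
submodular dominance: `E[f(X_1 ∪ ⋯ ∪ X_p)] ≥ F(q)` for every submodular `f : 2^E → ℝ`. -/
theorem statement13 {E : Type} [Fintype E] [DecidableEq E]
    (p : ℕ) (part : Fin p → Finset E)
    (hne : ∀ j, (part j).Nonempty)
    (hdisj : ∀ j j' : Fin p, j ≠ j' → Disjoint (part j) (part j'))
    (hcover : ∀ i : E, ∃ j, i ∈ part j)
    (Ω : Type) [MeasurableSpace Ω] (μ : Measure Ω) [IsProbabilityMeasure μ]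
    (X : Fin p → Ω → Finset E)
    (hXsub : ∀ j ω, X j ω ⊆ part j)
    (hmeas : ∀ j, @Measurable Ω (Finset E) _ ⊤ (X j))
    (hindep : iIndepFun (m := fun _ => (⊤ : MeasurableSpace (Finset E))) X μ)
    (q : E → ℝ)
    (hq : ∀ j : Fin p, ∀ i ∈ part j, (μ {ω | i ∈ X j ω}).toReal = q i)
    (hdom : ∀ (j : Fin p) (g : Finset E → ℝ), SubmodularOn (part j) g →
      multilinearOn (part j) g q ≤ ∫ ω, g (X j ω) ∂μ)
    (f : Finset E → ℝ) (hf : Submodular f) :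
    multilinear f q ≤ ∫ ω, f (Finset.univ.biUnion (fun j => X j ω)) ∂μ := by
  letI : MeasurableSpace (Finset E) := ⊤
  haveI : MeasurableSingletonClass (Finset E) := ⟨fun _ => trivial⟩
  have hq0 : ∀ i, 0 ≤ q i := by
    intro i
    obtain ⟨j, hj⟩ := hcover i
    rw [← hq j i hj]
    exact ENNReal.toReal_nonneg
  have hq1 : ∀ i, q i ≤ 1 := by
    intro i
    obtain ⟨j, hj⟩ := hcover i
    rw [← hq j i hj]
    have h := prob_le_one (μ := μ) (s := {ω | i ∈ X j ω})
    have h2 := ENNReal.toReal_mono ENNReal.one_ne_top h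
    simpa using h2
  -- key single-part inequality
  have key : ∀ (k : Fin p) (H : Finset E), Disjoint (part k) H → ∀ B : Finset E,
      multilinearOn (part k ∪ H) (fun R => f (B ∪ R)) q
        ≤ ∫ ω, multilinearOn H (fun R => f ((B ∪ X k ω) ∪ R)) q ∂μ := by
    intro k H hkH B
    rw [multilinearOn_union _ _ hkH]
    have heq : (fun S => multilinearOn H (fun R => f (B ∪ (S ∪ R))) q)
        = fun S => multilinearOn H (fun R => f ((B ∪ S) ∪ R)) q := by
      funext S
      congr 1
      funext R
      rw [Finset.union_assoc]
    rw [heq]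
    exact hdom k _ (submodularOn_aux _ _ _ _ hf q hq0 hq1)
  have main : ∀ J : Finset (Fin p),
      multilinear f q ≤ ∫ ω, multilinearOn ((Finset.univ \ J).biUnion part)
        (fun R => f ((J.biUnion fun j => X j ω) ∪ R)) q ∂μ := by
    intro J
    induction J using Finset.induction_on with
    | empty =>
      have hUc : (Finset.univ \ (∅ : Finset (Fin p))).biUnion part
          = (Finset.univ : Finset E) := by
        ext i
        simp only [Finset.sdiff_empty, Finset.mem_biUnion, Finset.mem_univ, iff_true, true_and]
        exact hcover i
      simp only [Finset.biUnion_empty, Finset.empty_union, hUc]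
      rw [integral_const]
      simp [multilinear]
    | @insert k J hk IH =>
      refine le_trans IH ?_
      set Y : Ω → Finset E := fun ω => J.biUnion fun j => X j ω with hYdef
      have hYmeas : Measurable Y := by
        have hZ : Measurable (fun ω (j : Fin p) => X j ω) :=
          measurable_pi_lambda _ hmeas
        exact (measurable_of_countable (fun t : Fin p → Finset E => J.biUnion t)).comp hZ
      have hsep : IndepFun Y (X k) μ := by
        have h1 := (hindep.indepFun_finset J {k}
            (Finset.disjoint_singleton_right.mpr hk) hmeas).comp
          (measurable_of_countable
            (fun t : {x // x ∈ J} → Finset E => Finset.univ.biUnion fun i => t i))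
          (measurable_of_countable
            (fun t : {x // x ∈ ({k} : Finset (Fin p))} → Finset E =>
              t ⟨k, Finset.mem_singleton_self k⟩))
        have e1 : ((fun t : {x // x ∈ J} → Finset E => Finset.univ.biUnion fun i => t i)
            ∘ (fun a (i : {x // x ∈ J}) => X i a)) = Y := by
          funext ω
          ext a
          simp only [Function.comp_apply, Finset.mem_biUnion, Finset.mem_univ, true_and, hYdef]
          constructor
          · rintro ⟨i, hi⟩
            exact ⟨i, i.2, hi⟩
          · rintro ⟨j, hj, hja⟩
            exact ⟨⟨j, hj⟩, hja⟩
        have e2 : ((fun t : {x // x ∈ ({k} : Finset (Fin p))} → Finset E =>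
            t ⟨k, Finset.mem_singleton_self k⟩)
            ∘ (fun a (i : {x // x ∈ ({k} : Finset (Fin p))}) => X i a)) = X k := rfl
        rwa [e1, e2] at h1
      have hprod : ∀ B S : Finset E,
          μ (Y ⁻¹' {B} ∩ X k ⁻¹' {S}) = μ (Y ⁻¹' {B}) * μ (X k ⁻¹' {S}) := fun B S =>
        hsep.measure_inter_preimage_eq_mul _ _ (measurableSet_singleton B)
          (measurableSet_singleton S)
      set Uc' : Finset E := (Finset.univ \ insert k J).biUnion part with hUc'def
      set ψ : Finset E × Finset E → ℝ :=
        fun v => multilinearOn Uc' (fun R => f ((v.1 ∪ v.2) ∪ R)) q with hψdef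
      have hL : ∫ ω, multilinearOn ((Finset.univ \ J).biUnion part)
            (fun R => f (Y ω ∪ R)) q ∂μ
          = ∑ B : Finset E, multilinearOn ((Finset.univ \ J).biUnion part)
              (fun R => f (B ∪ R)) q * (μ (Y ⁻¹' {B})).toReal :=
        integral_eq_sum_fintype μ Y hYmeas
          (fun B => multilinearOn ((Finset.univ \ J).biUnion part) (fun R => f (B ∪ R)) q)
      have hR : ∫ ω, multilinearOn Uc'
            (fun R => f (((insert k J).biUnion fun j => X j ω) ∪ R)) q ∂μ
          = ∑ B : Finset E, ∑ S : Finset E,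
              ψ (B, S) * ((μ (Y ⁻¹' {B})).toReal * (μ (X k ⁻¹' {S})).toReal) := by
        have h0 : ∀ ω, multilinearOn Uc'
            (fun R => f (((insert k J).biUnion fun j => X j ω) ∪ R)) q
            = ψ (Y ω, X k ω) := by
          intro ω
          have hbi : (insert k J).biUnion (fun j => X j ω) = Y ω ∪ X k ω := by
            rw [Finset.biUnion_insert]
            exact Finset.union_comm _ _
          simp only [hbi, hψdef]
        calc ∫ ω, multilinearOn Uc'
              (fun R => f (((insert k J).biUnion fun j => X j ω) ∪ R)) q ∂μ
            = ∫ ω, ψ (Y ω, X k ω) ∂μ :=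
              integral_congr_ae (Filter.Eventually.of_forall h0)
          _ = ∑ v : Finset E × Finset E,
                ψ v * (μ ((fun ω => (Y ω, X k ω)) ⁻¹' {v})).toReal :=
              integral_eq_sum_fintype μ _ (hYmeas.prodMk (hmeas k)) ψ
          _ = ∑ B : Finset E, ∑ S : Finset E,
                ψ (B, S) * ((μ (Y ⁻¹' {B})).toReal * (μ (X k ⁻¹' {S})).toReal) := by
              rw [Fintype.sum_prod_type]
              refine Finset.sum_congr rfl fun B _ => Finset.sum_congr rfl fun S _ => ?_
              have hpre : (fun ω => (Y ω, X k ω)) ⁻¹' {(B, S)}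
                  = Y ⁻¹' {B} ∩ X k ⁻¹' {S} := by
                ext ω
                simp [Prod.ext_iff]
              rw [hpre, hprod, ENNReal.toReal_mul]
      rw [hL, hR]
      refine Finset.sum_le_sum fun B _ => ?_
      have hrw : ∑ S : Finset E,
            ψ (B, S) * ((μ (Y ⁻¹' {B})).toReal * (μ (X k ⁻¹' {S})).toReal)
          = (∑ S : Finset E, ψ (B, S) * (μ (X k ⁻¹' {S})).toReal) * (μ (Y ⁻¹' {B})).toReal := by
        rw [Finset.sum_mul]
        exact Finset.sum_congr rfl fun S _ => by ring
      rw [hrw]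
      refine mul_le_mul_of_nonneg_right ?_ ENNReal.toReal_nonneg
      have hsplit : Finset.univ \ J = insert k (Finset.univ \ insert k J) := by
        ext j
        by_cases hjk : j = k
        · subst hjk
          simp [hk]
        · simp [Finset.mem_sdiff, Finset.mem_insert, hjk]
      have hUc : (Finset.univ \ J).biUnion part = part k ∪ Uc' := by
        rw [hsplit, Finset.biUnion_insert, hUc'def]
      have hdisjU : Disjoint (part k) Uc' := by
        rw [hUc'def, Finset.disjoint_biUnion_right]
        intro j hj
        refine hdisj k j fun h => ?_
        rw [← h] at hj
        simp at hj
      calc multilinearOn ((Finset.univ \ J).biUnion part) (fun R => f (B ∪ R)) q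
          = multilinearOn (part k ∪ Uc') (fun R => f (B ∪ R)) q := by rw [hUc]
        _ ≤ ∫ ω, multilinearOn Uc' (fun R => f ((B ∪ X k ω) ∪ R)) q ∂μ :=
            key k Uc' hdisjU B
        _ = ∑ S : Finset E, ψ (B, S) * (μ (X k ⁻¹' {S})).toReal :=
            integral_eq_sum_fintype μ (X k) (hmeas k) (fun S => ψ (B, S))
  have h := main Finset.univ
  simpa [Finset.sdiff_self, multilinearOn_empty, Finset.union_empty] using h
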